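/- Suppose δ < N/(λθ), λθ ≤ Nμ, and R = a + ib satisfies the characteristic equation -R - (λθ/N)e^{-RΔ}(1 + δR) - μ = 0 for some Δ > 0. Then a < 0; i.e., all eigenvalue real parts are negative. -/

import Mathlib

open Real Complex

set_option maxHeartbeats 1600000 in
theorem eigenvalues_negative_real_part
    (lam mu th dlt Del a b : ℝ) (N : ℕ) (hN : 0 < N)
    (hlam : 0 < lam) (hmu : 0 < mu) (hth : 0 < th) (hdlt : 0 ≤ dlt) (hDel : 0 < Del)
    (hsmall : dlt < N / (lam * th)) (hstab : lam * th ≤ N * mu)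
    (R : ℂ) (hR : R = (a : ℂ) + (b : ℂ) * Complex.I)
    (hchar : -R - ((lam * th / N : ℝ) : ℂ) *
        (Complex.exp (-R * (Del : ℂ)) * (1 + (dlt : ℂ) * R))
        - (mu : ℂ) = 0) :
    a < 0 := by
  by_contra h
  push_neg at h
  subst hR
  set c : ℝ := lam * th / N with hc
  have hNpos : (0:ℝ) < N := by exact_mod_cast hN
  have hcpos : 0 < c := by positivity
  have hcmu : c ≤ mu := by
    rw [hc, div_le_iff₀ hNpos]; nlinarith
  have hcd : c * dlt < 1 := by
    have h1 := (lt_div_iff₀ (by positivity : (0:ℝ) < lam*th)).mp hsmall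
    rw [hc, div_mul_eq_mul_div, div_lt_one hNpos]; nlinarith
  have heq : ((a:ℂ)+(b:ℂ)*Complex.I) + (mu:ℂ)
      = -((c:ℂ) * (Complex.exp (-((a:ℂ)+(b:ℂ)*Complex.I) * (Del:ℂ)) *
          (1 + (dlt:ℂ) * ((a:ℂ)+(b:ℂ)*Complex.I)))) := by
    linear_combination -hchar
  have habs := congrArg (fun z : ℂ => ‖z‖) heq
  rw [norm_neg, norm_mul, norm_mul, Complex.norm_exp, Complex.norm_real, Real.norm_eq_abs] at habs
  have hre : (-((a:ℂ)+(b:ℂ)*Complex.I) * (Del:ℂ)).re = -(a*Del) := by simp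
  rw [hre, abs_of_pos hcpos] at habs
  have hEpos : 0 < Real.exp (-(a*Del)) := Real.exp_pos _
  have hE1 : Real.exp (-(a*Del)) ≤ 1 := Real.exp_le_one_iff.mpr (neg_nonpos.mpr (mul_nonneg h hDel.le))
  have h1 : (‖(a:ℂ)+(b:ℂ)*Complex.I + (mu:ℂ)‖)^2 = (a+mu)^2 + b^2 := by
    rw [Complex.sq_norm]; simp [Complex.normSq_apply]; ring
  have h2 : (‖1+(dlt:ℂ)*((a:ℂ)+(b:ℂ)*Complex.I)‖)^2 = (1+dlt*a)^2 + (dlt*b)^2 := by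
    rw [Complex.sq_norm]; simp [Complex.normSq_apply]; ring
  have hsq : (a+mu)^2 + b^2
      = c^2 * (Real.exp (-(a*Del)))^2 * ((1+dlt*a)^2 + (dlt*b)^2) := by
    have h3 := congrArg (·^2) habs
    rw [h1] at h3
    rw [h3, mul_pow, mul_pow, h2]; ring
  clear habs h1 h2 hchar hsmall hstab
  have hkey : c * (1 + dlt*a) ≤ a + mu := by nlinarith
  have hX : (0:ℝ) ≤ c * (1 + dlt*a) := by nlinarith [mul_nonneg hdlt h]
  have hsq1 : (c*(1+dlt*a))^2 ≤ (a+mu)^2 := pow_le_pow_left₀ hX hkey 2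
  have hcd0 : (0:ℝ) ≤ c * dlt := mul_nonneg hcpos.le hdlt
  have hcd2 : (c*dlt)^2 ≤ 1 := pow_le_one₀ hcd0 hcd.le
  have hsq2 : (c*dlt)^2 * b^2 ≤ b^2 := by
    calc (c*dlt)^2 * b^2 ≤ 1 * b^2 := mul_le_mul_of_nonneg_right hcd2 (sq_nonneg b)
    _ = b^2 := one_mul _
  have hS : (1:ℝ) ≤ (1+dlt*a)^2 + (dlt*b)^2 := by
    nlinarith [mul_nonneg hdlt h, sq_nonneg (dlt*b)]
  have step2 : c^2 * ((1+dlt*a)^2 + (dlt*b)^2) ≤ (a+mu)^2 + b^2 := by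
    nlinarith [hsq1, hsq2]
  rcases h.lt_or_eq with ha | ha0
  · -- a > 0, exp < 1
    have hElt : Real.exp (-(a*Del)) < 1 :=
      Real.exp_lt_one_iff.mpr (neg_lt_zero.mpr (mul_pos ha hDel))
    have hE2 : (Real.exp (-(a*Del)))^2 < 1 := by nlinarith
    have step1 : c^2 * (Real.exp (-(a*Del)))^2 * ((1+dlt*a)^2 + (dlt*b)^2)
        < c^2 * ((1+dlt*a)^2 + (dlt*b)^2) := by
      nlinarith [mul_pos (pow_pos hcpos 2) (sub_pos.mpr hE2),
        mul_nonneg (mul_pos (pow_pos hcpos 2) (sub_pos.mpr hE2)).le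
          (by linarith : (0:ℝ) ≤ (1+dlt*a)^2 + (dlt*b)^2 - 1)]
    linarith [hsq, step1, step2]
  · -- a = 0
    have ha : a = 0 := ha0.symm
    rw [ha] at hsq
    norm_num at hsq
    -- hsq : mu^2 + b^2 = c^2 * (1 + (dlt*b)^2)  (roughly)
    have hc2 : c^2 ≤ mu^2 := pow_le_pow_left₀ hcpos.le hcmu 2
    have hcd2' : (c*dlt)^2 < 1 := by
      nlinarith [mul_nonneg hcpos.le hdlt]
    have hb2 : b^2 * (1 - (c*dlt)^2) ≤ 0 := by nlinarith [hc2]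
    have hb2' : b^2 ≤ 0 := by nlinarith [sub_pos.mpr hcd2', hb2]
    have hb : b = 0 := by
      have hbz : b^2 = 0 := le_antisymm hb2' (sq_nonneg b)
      exact pow_eq_zero_iff (n := 2) (by norm_num) |>.mp hbz
    have hmc : (mu:ℂ) = -(c:ℂ) := by
      rw [ha, hb] at heq; simpa using heq
    have hre2 := congrArg Complex.re hmc
    simp at hre2
    linarith
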